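/- For all r, s ≥ 0 and every a ∈ A, if D₁ ∈ 𝒟'_r(A) and D₂ ∈ 𝒟'_s(A), then D₁ ∘ l_a ∘ D₂ ∈ 𝒟_{r+s}(A). -/

import Mathlib

/-- `𝒟_n(A)`: the k-submodule of `End_k(A)` spanned by
`{l_a ∘ φ ∘ l_b : a b : A, φ ∈ 𝒟'_n(A)}`, where
`𝒟'_n(A) = {φ : l_t ∘ φ - φ ∘ l_t ∈ 𝒟_{n-1}(A) for all t}` and `𝒟_{-1}(A) = 0`. -/
noncomputable def Dnc (k : Type*) (A : Type*) [CommRing k] [Ring A] [Algebra k A] :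
    ℕ → Submodule k (Module.End k A)
  | 0 => Submodule.span k {ψ | ∃ (a b : A) (φ : Module.End k A),
      (∀ t : A, LinearMap.mulLeft k t * φ - φ * LinearMap.mulLeft k t = 0) ∧
      ψ = LinearMap.mulLeft k a * φ * LinearMap.mulLeft k b}
  | (n + 1) => Submodule.span k {ψ | ∃ (a b : A) (φ : Module.End k A),
      (∀ t : A, LinearMap.mulLeft k t * φ - φ * LinearMap.mulLeft k t ∈ Dnc k A n) ∧
      ψ = LinearMap.mulLeft k a * φ * LinearMap.mulLeft k b}

/-- `𝒟'_n(A) = {φ ∈ End_k(A) : l_t ∘ φ - φ ∘ l_t ∈ 𝒟_{n-1}(A) for all t ∈ A}`,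
with `𝒟_{-1}(A) = 0`. -/
noncomputable def Dnc' (k : Type*) (A : Type*) [CommRing k] [Ring A] [Algebra k A] :
    ℕ → Set (Module.End k A)
  | 0 => {φ | ∀ t : A, LinearMap.mulLeft k t * φ - φ * LinearMap.mulLeft k t = 0}
  | (n + 1) => {φ | ∀ t : A, LinearMap.mulLeft k t * φ - φ * LinearMap.mulLeft k t ∈ Dnc k A n}

section Aux
variable {k A : Type*} [CommRing k] [Ring A] [Algebra k A]

lemma Dnc_eq (n : ℕ) : Dnc k A n = Submodule.span k
    {ψ | ∃ (a b : A) (φ : Module.End k A), φ ∈ Dnc' k A n ∧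
      ψ = LinearMap.mulLeft k a * φ * LinearMap.mulLeft k b} := by
  cases n <;> rfl

lemma mem_Dnc_of_Dnc' {n : ℕ} {φ : Module.End k A} (hφ : φ ∈ Dnc' k A n) (a b : A) :
    LinearMap.mulLeft k a * φ * LinearMap.mulLeft k b ∈ Dnc k A n := by
  rw [Dnc_eq]
  exact Submodule.subset_span ⟨a, b, φ, hφ, rfl⟩

lemma mulLeft_mul_eq (a c : A) :
    LinearMap.mulLeft k (a * c) = LinearMap.mulLeft k a * LinearMap.mulLeft k c := by
  rw [LinearMap.mulLeft_mul]; rfl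

lemma mulLeft_mul_mem {n : ℕ} (a : A) {E : Module.End k A} (hE : E ∈ Dnc k A n) :
    LinearMap.mulLeft k a * E ∈ Dnc k A n := by
  rw [Dnc_eq] at hE ⊢
  induction hE using Submodule.span_induction with
  | mem x hx =>
    obtain ⟨c, d, φ, hφ, rfl⟩ := hx
    exact Submodule.subset_span ⟨a * c, d, φ, hφ, by rw [mulLeft_mul_eq]; noncomm_ring⟩
  | zero => simp
  | add x y _ _ hx hy => rw [mul_add]; exact Submodule.add_mem _ hx hy
  | smul c x _ hx => rw [mul_smul_comm]; exact Submodule.smul_mem _ _ hx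

lemma mul_mulLeft_mem {n : ℕ} (b : A) {E : Module.End k A} (hE : E ∈ Dnc k A n) :
    E * LinearMap.mulLeft k b ∈ Dnc k A n := by
  rw [Dnc_eq] at hE ⊢
  induction hE using Submodule.span_induction with
  | mem x hx =>
    obtain ⟨c, d, φ, hφ, rfl⟩ := hx
    exact Submodule.subset_span ⟨c, d * b, φ, hφ, by rw [mulLeft_mul_eq]; noncomm_ring⟩
  | zero => simp
  | add x y _ _ hx hy => rw [add_mul]; exact Submodule.add_mem _ hx hy
  | smul c x _ hx => rw [smul_mul_assoc]; exact Submodule.smul_mem _ _ hx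

lemma mono_aux (n : ℕ) : Dnc' k A n ⊆ Dnc' k A (n+1) ∧ Dnc k A n ≤ Dnc k A (n+1) := by
  induction n with
  | zero =>
    have h' : Dnc' k A 0 ⊆ Dnc' k A 1 := by
      intro φ h t
      have ht : LinearMap.mulLeft k t * φ - φ * LinearMap.mulLeft k t = 0 := h t
      rw [ht]; exact Submodule.zero_mem _
    refine ⟨h', ?_⟩
    rw [Dnc_eq 0, Dnc_eq 1]
    exact Submodule.span_mono (fun ψ ⟨a, b, φ, hφ, hψ⟩ => ⟨a, b, φ, h' hφ, hψ⟩)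
  | succ n ih =>
    have h' : Dnc' k A (n+1) ⊆ Dnc' k A (n+2) := fun φ h t => ih.2 (h t)
    refine ⟨h', ?_⟩
    rw [Dnc_eq (n+1), Dnc_eq (n+2)]
    exact Submodule.span_mono (fun ψ ⟨a, b, φ, hφ, hψ⟩ => ⟨a, b, φ, h' hφ, hψ⟩)

lemma Dnc_mono {m n : ℕ} (h : m ≤ n) : Dnc k A m ≤ Dnc k A n := by
  induction h with
  | refl => exact le_refl _
  | step _ ih => exact ih.trans (mono_aux _).2

lemma Dnc_mul_Dnc' {n s : ℕ}
    (hmain : ∀ (a : A) (D₁ D₂ : Module.End k A), D₁ ∈ Dnc' k A n → D₂ ∈ Dnc' k A s →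
      D₁ * LinearMap.mulLeft k a * D₂ ∈ Dnc k A (n + s))
    {E D₂ : Module.End k A} (hE : E ∈ Dnc k A n) (hD : D₂ ∈ Dnc' k A s) :
    E * D₂ ∈ Dnc k A (n + s) := by
  rw [Dnc_eq] at hE
  induction hE using Submodule.span_induction with
  | mem x hx =>
    obtain ⟨c, d, φ, hφ, rfl⟩ := hx
    have h : LinearMap.mulLeft k c * φ * LinearMap.mulLeft k d * D₂
        = LinearMap.mulLeft k c * (φ * LinearMap.mulLeft k d * D₂) := by noncomm_ring
    rw [h]
    exact mulLeft_mul_mem c (hmain d φ D₂ hφ hD)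
  | zero => simp
  | add x y _ _ hx hy => rw [add_mul]; exact Submodule.add_mem _ hx hy
  | smul c x _ hx => rw [smul_mul_assoc]; exact Submodule.smul_mem _ _ hx

lemma Dnc'_mul_Dnc {r n : ℕ}
    (hmain : ∀ (a : A) (D₁ D₂ : Module.End k A), D₁ ∈ Dnc' k A r → D₂ ∈ Dnc' k A n →
      D₁ * LinearMap.mulLeft k a * D₂ ∈ Dnc k A (r + n))
    {D₁ E : Module.End k A} (hD : D₁ ∈ Dnc' k A r) (hE : E ∈ Dnc k A n) :
    D₁ * E ∈ Dnc k A (r + n) := by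
  rw [Dnc_eq] at hE
  induction hE using Submodule.span_induction with
  | mem x hx =>
    obtain ⟨c, d, φ, hφ, rfl⟩ := hx
    have h : D₁ * (LinearMap.mulLeft k c * φ * LinearMap.mulLeft k d)
        = (D₁ * LinearMap.mulLeft k c * φ) * LinearMap.mulLeft k d := by noncomm_ring
    rw [h]
    exact mul_mulLeft_mem d (hmain c D₁ φ hD hφ)
  | zero => simp
  | add x y _ _ hx hy => rw [mul_add]; exact Submodule.add_mem _ hx hy
  | smul c x _ hx => rw [mul_smul_comm]; exact Submodule.smul_mem _ _ hx

lemma main_aux : ∀ N r s, r + s = N → ∀ (a : A) (D₁ D₂ : Module.End k A),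
    D₁ ∈ Dnc' k A r → D₂ ∈ Dnc' k A s →
    D₁ * LinearMap.mulLeft k a * D₂ ∈ Dnc k A (r + s) := by
  intro N
  induction N using Nat.strong_induction_on with
  | _ N ih =>
  intro r s hN a D₁ D₂ h₁ h₂
  have hcomm : ∀ t : A, LinearMap.mulLeft k t * (D₁ * D₂) - (D₁ * D₂) * LinearMap.mulLeft k t
      = (LinearMap.mulLeft k t * D₁ - D₁ * LinearMap.mulLeft k t) * D₂
        + D₁ * (LinearMap.mulLeft k t * D₂ - D₂ * LinearMap.mulLeft k t) := by
    intro t; simp only [sub_mul, mul_sub, mul_assoc]; abel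
  have hD : D₁ * D₂ ∈ Dnc' k A (r + s) := by
    obtain _ | r := r <;> obtain _ | s := s
    · intro t
      have e1 : LinearMap.mulLeft k t * D₁ - D₁ * LinearMap.mulLeft k t = 0 := h₁ t
      have e2 : LinearMap.mulLeft k t * D₂ - D₂ * LinearMap.mulLeft k t = 0 := h₂ t
      rw [hcomm t, e1, e2]
      simp
    · intro t
      have e1 : LinearMap.mulLeft k t * D₁ - D₁ * LinearMap.mulLeft k t = 0 := h₁ t
      rw [hcomm t, e1, zero_mul, zero_add]
      exact Dnc'_mul_Dnc (ih s (by omega) 0 s (by omega)) h₁ (h₂ t)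
    · intro t
      have e2 : LinearMap.mulLeft k t * D₂ - D₂ * LinearMap.mulLeft k t = 0 := h₂ t
      rw [hcomm t, e2, mul_zero, add_zero]
      exact Dnc_mul_Dnc' (ih r (by omega) r 0 (by omega)) (h₁ t) h₂
    · intro t
      rw [hcomm t]
      refine Submodule.add_mem _ ?_ ?_
      · have hm := Dnc_mul_Dnc' (ih (r + (s+1)) (by omega) r (s+1) (by omega)) (h₁ t) h₂
        exact Dnc_mono (show r + (s+1) ≤ (r+1) + s by omega) hm
      · have hm := Dnc'_mul_Dnc (ih ((r+1) + s) (by omega) (r+1) s (by omega)) h₁ (h₂ t)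
        exact hm
  have hB : (D₁ * LinearMap.mulLeft k a - LinearMap.mulLeft k a * D₁) * D₂ ∈ Dnc k A (r + s) := by
    obtain _ | r := r
    · have e1 : D₁ * LinearMap.mulLeft k a - LinearMap.mulLeft k a * D₁ = 0 := by
        rw [← neg_sub, h₁ a, neg_zero]
      rw [e1, zero_mul]
      exact Submodule.zero_mem _
    · have e1 : D₁ * LinearMap.mulLeft k a - LinearMap.mulLeft k a * D₁ ∈ Dnc k A r := by
        have := Submodule.neg_mem _ (h₁ a)
        simpa using this
      have hm := Dnc_mul_Dnc' (ih (r + s) (by omega) r s (by omega)) e1 h₂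
      exact Dnc_mono (by omega) hm
  have h1 : LinearMap.mulLeft k (1 : A) = (1 : Module.End k A) := by
    ext x; simp
  have key : D₁ * LinearMap.mulLeft k a * D₂
      = LinearMap.mulLeft k a * (D₁ * D₂) * LinearMap.mulLeft k (1 : A)
        + (D₁ * LinearMap.mulLeft k a - LinearMap.mulLeft k a * D₁) * D₂ := by
    rw [h1]; simp only [mul_one, sub_mul, mul_assoc]; abel
  rw [key]
  exact Submodule.add_mem _ (mem_Dnc_of_Dnc' hD a 1) hB

end Aux

/-- If `D₁ ∈ 𝒟'_r(A)` and `D₂ ∈ 𝒟'_s(A)` then `D₁ ∘ l_a ∘ D₂ ∈ 𝒟_{r+s}(A)`. -/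
theorem Dnc'_comp_mulLeft_comp_Dnc' (k : Type*) (A : Type*) [CommRing k] [Ring A] [Algebra k A]
    (r s : ℕ) (a : A) (D₁ D₂ : Module.End k A)
    (h₁ : D₁ ∈ Dnc' k A r) (h₂ : D₂ ∈ Dnc' k A s) :
    D₁ * LinearMap.mulLeft k a * D₂ ∈ Dnc k A (r + s) := by
  exact main_aux (r + s) r s rfl a D₁ D₂ h₁ h₂
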